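/- For I(n) := ∫₀¹ (x^n + (1−x)^n)^{1/n} dx, the limit of n²·(I(n) − 3/4) as n → ∞ equals π²/48. -/

import Mathlib

open MeasureTheory Real

noncomputable def zetaVal (s : ℕ) : ℝ := ∑' k : ℕ, 1 / ((k : ℝ) + 1) ^ s

noncomputable def polylog (m : ℕ) (z : ℝ) : ℝ := ∑' k : ℕ, z ^ (k + 1) / ((k : ℝ) + 1) ^ m

noncomputable def harm (p k : ℕ) : ℝ := ∑ j ∈ Finset.range k, 1 / ((j : ℝ) + 1) ^ p

noncomputable def Ifun (n : ℕ) : ℝ := ∫ x in (0:ℝ)..1, (x ^ n + (1 - x) ^ n) ^ ((1:ℝ) / n)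

open Set Filter Topology


lemma hs_basel : HasSum (fun k : ℕ => 1 / ((k:ℝ) + 1) ^ 2) (π ^ 2 / 6) := by
  have h := hasSum_zeta_two
  have h2 : HasSum (fun n : ℕ => (1:ℝ) / ((n + 1 : ℕ):ℝ) ^ 2) (π ^ 2 / 6) :=
    (hasSum_nat_add_iff (f := fun n : ℕ => (1:ℝ)/(n:ℝ)^2) 1).2 (by simpa using h)
  simpa using h2

lemma hs_pair : HasSum (fun m : ℕ => 1 / ((2*m:ℝ) + 1) ^ 2 - 1 / ((2*m:ℝ) + 2) ^ 2) (π ^ 2 / 12) := by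
  set f : ℕ → ℝ := fun k => 1 / ((k:ℝ) + 1) ^ 2 with hf
  have htot : HasSum f (π ^ 2 / 6) := hs_basel
  have hodd : HasSum (fun m : ℕ => f (2*m+1)) (π ^ 2 / 24) := by
    have h4 := htot.mul_left (1/4)
    have he : (fun m : ℕ => (1/4) * f m) = fun m : ℕ => f (2*m+1) := by
      funext m; simp only [hf]; push_cast
      have h1 : ((m:ℝ)+1)^2 ≠ 0 := by positivity
      have h2 : (2*(m:ℝ)+1+1)^2 ≠ 0 := by positivity
      field_simp; ring
    rw [he] at h4
    rw [show (π^2/24:ℝ) = 1/4*(π^2/6) by ring]; exact h4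
  have hevenS : Summable (fun m : ℕ => f (2*m)) := by
    refine Summable.of_nonneg_of_le (fun m => by positivity) (fun m => ?_) htot.summable
    simp only [hf]
    refine one_div_le_one_div_of_le (by positivity) ?_
    push_cast
    nlinarith [Nat.cast_nonneg (α := ℝ) m]
  have heven := hevenS.hasSum
  have huniq := htot.unique (heven.even_add_odd hodd)
  have hE : ∑' m : ℕ, f (2*m) = π ^ 2 / 8 := by linarith
  rw [hE] at heven
  have hsub := heven.sub hodd
  have hfun : (fun m : ℕ => f (2*m) - f (2*m+1))
      = fun m : ℕ => 1 / ((2*m:ℝ) + 1) ^ 2 - 1 / ((2*m:ℝ) + 2) ^ 2 := by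
    funext m; simp only [hf]; push_cast; ring_nf
  rw [hfun] at hsub
  rw [show (π^2/12 : ℝ) = π^2/8 - π^2/24 by ring]
  exact hsub

lemma hs_series {t : ℝ} (ht0 : 0 < t) (ht1 : t < 1) :
    HasSum (fun m : ℕ => t^(2*m)/(2*(m:ℝ)+1) - t^(2*m+1)/(2*(m:ℝ)+2)) (log (1+t)/t) := by
  have habs : |(-t)| < 1 := by rw [abs_neg, abs_of_pos ht0]; exact ht1
  have h0 := hasSum_pow_div_log_of_abs_lt_one habs
  rw [sub_neg_eq_add] at h0
  have h1 := (h0.neg).div_const t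
  -- h1 : HasSum (fun n => -((-t)^(n+1)/(n+1)) / t) (log (1+t)/t)
  rw [neg_neg] at h1
  set F : ℕ → ℝ := fun n => -((-t) ^ (n + 1) / ((n:ℝ) + 1)) / t with hF
  have hFe : ∀ m : ℕ, F (2*m) = t^(2*m)/(2*(m:ℝ)+1) := by
    intro m
    have hodd : Odd (2*m+1) := ⟨m, by ring⟩
    simp only [hF, hodd.neg_pow]
    push_cast
    field_simp
    ring
  have hFo : ∀ m : ℕ, F (2*m+1) = -(t^(2*m+1)/(2*(m:ℝ)+2)) := by
    intro m
    have hev : Even (2*m+1+1) := ⟨m+1, by ring⟩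
    simp only [hF, hev.neg_pow]
    push_cast
    field_simp
    ring
  have hgeom : Summable (fun m : ℕ => (t^2)^m) :=
    summable_geometric_of_lt_one (by positivity) (by nlinarith)
  have hSe : Summable (fun m : ℕ => F (2*m)) := by
    refine Summable.of_nonneg_of_le (fun m => ?_) (fun m => ?_) hgeom
    · rw [hFe m]; positivity
    · rw [hFe m, ← pow_mul]
      calc t^(2*m)/(2*(m:ℝ)+1) ≤ t^(2*m)/1 := by
            apply div_le_div_of_nonneg_left (by positivity) one_pos ?_
            · linarith [Nat.cast_nonneg (α := ℝ) m]
        _ = t^(2*m) := by rw [div_one]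
  have hSo : Summable (fun m : ℕ => F (2*m+1)) := by
    have : Summable (fun m : ℕ => -(t^(2*m+1)/(2*(m:ℝ)+2))) := by
      refine Summable.neg ?_
      refine Summable.of_nonneg_of_le (fun m => by positivity) (fun m => ?_) hgeom
      rw [← pow_mul]
      calc t^(2*m+1)/(2*(m:ℝ)+2) ≤ t^(2*m+1)/1 := by
            apply div_le_div_of_nonneg_left (by positivity) one_pos ?_
            · linarith [Nat.cast_nonneg (α := ℝ) m]
        _ = t^(2*m+1) := by rw [div_one]
        _ ≤ t^(2*m) := by
            apply pow_le_pow_of_le_one ht0.le ht1.le; omega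
    exact this.congr (fun m => (hFo m).symm)
  have heven := hSe.hasSum
  have hodd := hSo.hasSum
  have htotal := heven.even_add_odd hodd
  have huniq := h1.unique htotal
  have := heven.add hodd
  rw [← huniq] at this
  have hfinal : (fun b : ℕ => F (2*b) + F (2*b+1))
      = fun m : ℕ => t^(2*m)/(2*(m:ℝ)+1) - t^(2*m+1)/(2*(m:ℝ)+2) := by
    funext m; rw [hFe m, hFo m]; ring
  rwa [hfinal] at this

lemma int_pow_Ioo (k : ℕ) : ∫ t in Ioo (0:ℝ) 1, t^k = 1/((k:ℝ)+1) := by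
  rw [← integral_Ioc_eq_integral_Ioo, ← intervalIntegral.integral_of_le zero_le_one]
  simp [integral_pow]

lemma intble_pow (k : ℕ) : IntegrableOn (fun t : ℝ => t^k) (Ioo 0 1) volume :=
  ((continuous_pow k).integrableOn_Icc).mono_set Ioo_subset_Icc_self

lemma int_g (m : ℕ) :
    ∫ t in Ioo (0:ℝ) 1, (t^(2*m)/(2*(m:ℝ)+1) - t^(2*m+1)/(2*(m:ℝ)+2))
      = 1/((2*m:ℝ)+1)^2 - 1/((2*m:ℝ)+2)^2 := by
  have h1 : IntegrableOn (fun t : ℝ => t^(2*m)/(2*(m:ℝ)+1)) (Ioo 0 1) volume :=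
    (intble_pow (2*m)).div_const _
  have h2 : IntegrableOn (fun t : ℝ => t^(2*m+1)/(2*(m:ℝ)+2)) (Ioo 0 1) volume :=
    (intble_pow (2*m+1)).div_const _
  rw [integral_sub h1 h2, integral_div, integral_div, int_pow_Ioo, int_pow_Ioo]
  have e1 : (2*(m:ℝ)+1) ≠ 0 := by positivity
  have e2 : (2*(m:ℝ)+2) ≠ 0 := by positivity
  push_cast
  field_simp
  ring

lemma int_log_div : ∫ t in Ioo (0:ℝ) 1, log (1+t)/t = π^2/12 := by
  set g : ℕ → ℝ → ℝ := fun m t => t^(2*m)/(2*(m:ℝ)+1) - t^(2*m+1)/(2*(m:ℝ)+2) with hg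
  have hcont : ∀ m, Continuous (g m) := by
    intro m
    exact ((continuous_pow _).div_const _).sub ((continuous_pow _).div_const _)
  have hint : ∀ m, IntegrableOn (g m) (Ioo 0 1) volume := fun m =>
    ((hcont m).integrableOn_Icc).mono_set Ioo_subset_Icc_self
  have hbound : ∀ m : ℕ, ∀ t ∈ Ioo (0:ℝ) 1, ‖g m t‖ ≤ t^(2*m)/(2*(m:ℝ)+1) := by
    intro m t ht
    obtain ⟨ht0, ht1⟩ := ht
    rw [Real.norm_eq_abs, abs_le]
    constructor
    · have : 0 ≤ t^(2*m+1)/(2*(m:ℝ)+2) := by positivity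
      have h2 : t^(2*m+1)/(2*(m:ℝ)+2) ≤ t^(2*m)/(2*(m:ℝ)+1) := by
        apply div_le_div₀ (by positivity) ?_ (by positivity) (by linarith)
        calc t^(2*m+1) = t^(2*m) * t := by ring
          _ ≤ t^(2*m) * 1 := by
              apply mul_le_mul_of_nonneg_left ht1.le (by positivity)
          _ = t^(2*m) := mul_one _
      simp only [hg]; linarith
    · have : 0 ≤ t^(2*m+1)/(2*(m:ℝ)+2) := by positivity
      simp only [hg]; linarith
  have hnorm : ∀ m : ℕ, (∫ t in Ioo (0:ℝ) 1, ‖g m t‖) ≤ 1/((2*m:ℝ)+1)^2 := by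
    intro m
    have hb : IntegrableOn (fun t : ℝ => t^(2*m)/(2*(m:ℝ)+1)) (Ioo 0 1) volume :=
      (intble_pow (2*m)).div_const _
    calc (∫ t in Ioo (0:ℝ) 1, ‖g m t‖) ≤ ∫ t in Ioo (0:ℝ) 1, t^(2*m)/(2*(m:ℝ)+1) := by
          apply setIntegral_mono_on ((hint m).norm) hb measurableSet_Ioo
          exact hbound m
      _ = 1/((2*m:ℝ)+1)^2 := by
          rw [integral_div, int_pow_Ioo]
          push_cast; field_simp
  have hsumnorm : Summable (fun m : ℕ => ∫ t in Ioo (0:ℝ) 1, ‖g m t‖) := by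
    refine Summable.of_nonneg_of_le (fun m => ?_) (fun m => ?_) hs_basel.summable
    · exact integral_nonneg (fun t => norm_nonneg _)
    · refine le_trans (hnorm m) ?_
      apply one_div_le_one_div_of_le (by positivity)
      have : (0:ℝ) ≤ (m:ℝ) := Nat.cast_nonneg m
      nlinarith
  have key := integral_tsum_of_summable_integral_norm (μ := volume.restrict (Ioo 0 1))
    (fun m => hint m) hsumnorm
  have hcongr : ∫ t in Ioo (0:ℝ) 1, (∑' m, g m t) = ∫ t in Ioo (0:ℝ) 1, log (1+t)/t := by
    apply setIntegral_congr_fun measurableSet_Ioo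
    intro t ht
    exact (hs_series ht.1 ht.2).tsum_eq
  rw [hcongr] at key
  rw [← key]
  have : ∀ m : ℕ, (∫ t in Ioo (0:ℝ) 1, g m t) = 1/((2*m:ℝ)+1)^2 - 1/((2*m:ℝ)+2)^2 :=
    fun m => int_g m
  rw [tsum_congr this]
  exact hs_pair.tsum_eq

noncomputable def Fn (n : ℕ) (t : ℝ) : ℝ :=
  2*(n:ℝ)*((1+t)^((1:ℝ)/n) - 1)*t^((1:ℝ)/n - 1)/(1+t^((1:ℝ)/n))^3


lemma key_id' (n : ℕ) (hn : 1 ≤ n) :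
    (n:ℝ)^2 * (Ifun n - 3/4)
      = ∫ t in Ioo (0:ℝ) 1,
          2*(n:ℝ)*((1+t)^((1:ℝ)/n) - 1)*t^((1:ℝ)/n - 1)/(1+t^((1:ℝ)/n))^3 := by
  have hnR : (0:ℝ) < n := by exact_mod_cast hn
  set c : ℝ := (1:ℝ)/n with hc
  have hc0 : 0 < c := by positivity
  have hc1 : c ≤ 1 := by
    rw [hc, div_le_one hnR]; exact_mod_cast hn
  have hcn : c * n = 1 := by rw [hc]; field_simp
  set gfun : ℝ → ℝ := fun x => (x ^ n + (1 - x) ^ n) ^ c with hgfun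
  -- base positivity on [0,1]
  have hbase : ∀ x : ℝ, 0 ≤ x → x ≤ 1 → 0 < x ^ n + (1 - x) ^ n := by
    intro x hx0 hx1
    rcases eq_or_lt_of_le hx0 with h | h
    · rw [← h]; simp [zero_pow (by omega : n ≠ 0)]
    · have : 0 < x ^ n := pow_pos h n
      have : 0 ≤ (1 - x) ^ n := pow_nonneg (by linarith) n
      positivity
  -- continuity of gfun on [0,1]
  have hgcont : ContinuousOn gfun (Icc 0 1) := by
    apply ContinuousOn.rpow_const
    · exact ((continuous_pow n).continuousOn).add
        (Continuous.continuousOn (by continuity))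
    · intro x _; exact Or.inr hc0.le
  have hgsym : ∀ x : ℝ, gfun (1 - x) = gfun x := by
    intro x; simp only [hgfun, sub_sub_cancel]; ring_nf
  -- split & symmetry
  have hint1 : IntervalIntegrable gfun volume 0 (1/2) := by
    apply ContinuousOn.intervalIntegrable
    apply hgcont.mono
    rw [uIcc_of_le (by norm_num : (0:ℝ) ≤ 1/2)]
    exact Icc_subset_Icc (le_refl _) (by norm_num)
  have hint2 : IntervalIntegrable gfun volume (1/2) 1 := by
    apply ContinuousOn.intervalIntegrable
    apply hgcont.mono
    rw [uIcc_of_le (by norm_num : (1/2:ℝ) ≤ 1)]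
    exact Icc_subset_Icc (by norm_num) (le_refl _)
  have hsplit : Ifun n = (∫ x in (0:ℝ)..(1/2), gfun x) + ∫ x in (1/2:ℝ)..1, gfun x := by
    rw [Ifun]; exact (intervalIntegral.integral_add_adjacent_intervals hint1 hint2).symm
  have hswap : (∫ x in (0:ℝ)..(1/2), gfun x) = ∫ x in (1/2:ℝ)..1, gfun x := by
    have := intervalIntegral.integral_comp_sub_left (a := (1/2:ℝ)) (b := 1) gfun 1
    rw [show (1:ℝ) - 1 = 0 by norm_num, show (1:ℝ) - 1/2 = 1/2 by norm_num] at this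
    rw [← this]
    apply intervalIntegral.integral_congr
    intro x _
    simpa using (hgsym x)
  have hIfun : Ifun n = 2 * ∫ x in (1/2:ℝ)..1, gfun x := by
    rw [hsplit, hswap]; ring
  -- difference
  have hid : (∫ x in (1/2:ℝ)..1, x) = 3/8 := by
    rw [integral_id]; norm_num
  have hdiff : Ifun n - 3/4 = 2 * ∫ x in (1/2:ℝ)..1, (gfun x - x) := by
    rw [intervalIntegral.integral_sub hint2 (intervalIntegral.intervalIntegrable_id), hid, hIfun]
    ring
  -- to set integral over Ioo
  have hIoo : (∫ x in (1/2:ℝ)..1, (gfun x - x)) = ∫ x in Ioo (1/2:ℝ) 1, (gfun x - x) := by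
    rw [intervalIntegral.integral_of_le (by norm_num : (1/2:ℝ) ≤ 1),
      integral_Ioc_eq_integral_Ioo]
  -- change of variables
  set φ : ℝ → ℝ := fun t => (1 + t ^ c)⁻¹ with hφ
  set φ' : ℝ → ℝ := fun t => -(c * t ^ (c-1)) / (1 + t ^ c)^2 with hφ'
  have hu : ∀ t : ℝ, 0 < t → t < 1 → (0 < t ^ c ∧ t ^ c < 1) := by
    intro t ht0 ht1
    constructor
    · exact rpow_pos_of_pos ht0 c
    · exact rpow_lt_one ht0.le ht1 hc0
  have hderiv : ∀ t ∈ Ioo (0:ℝ) 1, HasDerivWithinAt φ (φ' t) (Ioo (0:ℝ) 1) t := by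
    intro t ht
    have h1 : HasDerivAt (fun s : ℝ => s ^ c) (c * t ^ (c-1)) t :=
      Real.hasDerivAt_rpow_const (Or.inl (ne_of_gt ht.1))
    have h2 := (h1.const_add 1)
    have hne : (1 + t ^ c) ≠ 0 := by
      have := (hu t ht.1 ht.2).1; positivity
    have h3 := h2.inv hne
    exact h3.hasDerivWithinAt
  have hinj : InjOn φ (Ioo (0:ℝ) 1) := by
    intro a ha b hb hab
    have hane : (1 + a ^ c) ≠ 0 := by have := (hu a ha.1 ha.2).1; positivity
    have hbne : (1 + b ^ c) ≠ 0 := by have := (hu b hb.1 hb.2).1; positivity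
    have h1 : a ^ c = b ^ c := by
      have := inv_injective hab
      linarith [this]
    have ha' : (a ^ c) ^ ((n:ℝ)) = a := by
      rw [← Real.rpow_mul ha.1.le, hcn, Real.rpow_one]
    have hb' : (b ^ c) ^ ((n:ℝ)) = b := by
      rw [← Real.rpow_mul hb.1.le, hcn, Real.rpow_one]
    rw [← ha', ← hb', h1]
  have himage : φ '' (Ioo (0:ℝ) 1) = Ioo (1/2:ℝ) 1 := by
    ext x
    constructor
    · rintro ⟨t, ht, rfl⟩
      obtain ⟨hu0, hu1⟩ := hu t ht.1 ht.2
      constructor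
      · rw [hφ]; simp only
        rw [inv_eq_one_div, lt_div_iff₀ (by linarith)]; linarith
      · rw [hφ]; simp only
        rw [inv_eq_one_div, div_lt_one (by linarith)]; linarith
    · intro hx
      obtain ⟨hx0, hx1⟩ := hx
      have hxpos : (0:ℝ) < x := by linarith
      set r : ℝ := (1 - x) / x with hr
      have hr0 : 0 < r := by
        apply div_pos (by linarith) hxpos
      have hr1 : r < 1 := by
        rw [hr, div_lt_one hxpos]; linarith
      refine ⟨r ^ n, ⟨pow_pos hr0 n, pow_lt_one₀ hr0.le hr1 (by omega)⟩, ?_⟩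
      have hrc : (r ^ n : ℝ) ^ c = r := by
        rw [← Real.rpow_natCast r n, ← Real.rpow_mul hr0.le]
        rw [show (n:ℝ) * c = 1 by rw [mul_comm]; exact hcn, Real.rpow_one]
      rw [hφ]
      simp only
      rw [hrc, hr]
      field_simp
      ring
  have hchg := integral_image_eq_integral_abs_deriv_smul measurableSet_Ioo hderiv hinj
    (fun x => gfun x - x)
  rw [himage] at hchg
  have hpoint : ∀ t ∈ Ioo (0:ℝ) 1,
      |φ' t| • (gfun (φ t) - φ t) = c * ((1+t)^c - 1) * t^(c-1) / (1+t^c)^3 := by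
    intro t ht
    obtain ⟨ht0, ht1⟩ := ht
    obtain ⟨hu0, hu1⟩ := hu t ht0 ht1
    set u : ℝ := t ^ c with hudef
    have hu1' : (0:ℝ) < 1 + u := by linarith
    have htc1 : 0 < t ^ (c-1) := rpow_pos_of_pos ht0 _
    have habs : |φ' t| = c * t^(c-1) / (1+u)^2 := by
      rw [hφ']; simp only
      rw [abs_div, abs_neg, abs_of_pos (by positivity), abs_of_pos (by positivity)]
    have hun : u ^ n = t := by
      rw [hudef, ← Real.rpow_natCast (t ^ c) n, ← Real.rpow_mul ht0.le, hcn, Real.rpow_one]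
    have hsub : 1 - (1+u)⁻¹ = u * (1+u)⁻¹ := by
      field_simp
      ring
    have hbase' : ((1+u)⁻¹) ^ n + (1 - (1+u)⁻¹) ^ n = (1 + t) / (1+u)^n := by
      rw [hsub, mul_pow, ← hun]
      field_simp
      rw [← mul_pow, one_div, inv_mul_cancel₀ hu1'.ne', one_pow]
    have hpow : ((1+u)^n : ℝ) ^ c = 1 + u := by
      rw [← Real.rpow_natCast (1+u) n, ← Real.rpow_mul hu1'.le,
        show (n:ℝ) * c = 1 by rw [mul_comm]; exact hcn, Real.rpow_one]
    have hval : gfun (φ t) = (1+t)^c * (1+u)⁻¹ := by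
      rw [hgfun, hφ]; simp only
      rw [hbase', Real.div_rpow (by linarith) (by positivity), hpow]
      rw [div_eq_mul_inv]
    rw [smul_eq_mul, habs, hval, hφ]; simp only
    have h3 : ((1+t)^c * (1+u)⁻¹ - (1+u)⁻¹) = ((1+t)^c - 1) * (1+u)⁻¹ := by ring
    rw [h3]
    field_simp
  rw [setIntegral_congr_fun measurableSet_Ioo hpoint] at hchg
  have hn2c : 2*(n:ℝ)^2*c = 2*n := by
    rw [hc]; field_simp
  calc (n:ℝ)^2 * (Ifun n - 3/4)
      = 2*(n:ℝ)^2 * ∫ t in Ioo (0:ℝ) 1, c * ((1+t)^c - 1) * t^(c-1) / (1+t^c)^3 := by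
        rw [hdiff, hIoo, hchg]; ring
    _ = ∫ t in Ioo (0:ℝ) 1, (2*(n:ℝ)^2) * (c * ((1+t)^c - 1) * t^(c-1) / (1+t^c)^3) := by
        rw [integral_const_mul]
    _ = ∫ t in Ioo (0:ℝ) 1, 2*(n:ℝ)*((1+t)^c - 1)*t^(c-1)/(1+t^c)^3 := by
        apply setIntegral_congr_fun measurableSet_Ioo
        intro t _
        linear_combination (((1+t)^c - 1)*t^(c-1)/(1+t^c)^3) * hn2c



lemma key_id (n : ℕ) (hn : 1 ≤ n) :
    (n:ℝ)^2 * (Ifun n - 3/4) = ∫ t in Ioo (0:ℝ) 1, Fn n t := key_id' n hn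

lemma exp_sub_one_le (y : ℝ) : exp y - 1 ≤ y * exp y := by
  have h1 := Real.add_one_le_exp (-y)
  have h2 : Real.exp (-y) = (Real.exp y)⁻¹ := Real.exp_neg y
  have h3 : 0 < Real.exp y := Real.exp_pos y
  rw [h2] at h1
  have h5 : (Real.exp y)⁻¹ * Real.exp y = 1 := inv_mul_cancel₀ (ne_of_gt h3)
  nlinarith [mul_le_mul_of_nonneg_right h1 h3.le]

lemma Fn_nonneg_bound {n : ℕ} (hn : 1 ≤ n) {t : ℝ} (ht0 : 0 < t) (ht1 : t < 1) :
    0 ≤ Fn n t ∧ Fn n t ≤ 4 := by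
  have hnR : (0:ℝ) < n := by exact_mod_cast hn
  set c : ℝ := (1:ℝ)/n with hc
  have hc0 : 0 < c := by positivity
  set L : ℝ := log (1+t) with hL
  have hL0 : 0 < L := log_pos (by linarith)
  have hLt : L ≤ t := by
    have := Real.log_le_sub_one_of_pos (x := 1+t) (by linarith)
    simpa [hL] using this
  have hrpow : (1+t) ^ c = exp (c * L) := by
    rw [rpow_def_of_pos (by linarith), hL, mul_comm]
  have hA0 : 0 ≤ (1+t) ^ c - 1 := by
    rw [hrpow]
    have : 0 ≤ c * L := by positivity
    linarith [Real.one_le_exp this]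
  have htc0 : 0 < t ^ (c-1) := rpow_pos_of_pos ht0 _
  have hu0 : 0 < t ^ c := rpow_pos_of_pos ht0 _
  have hD1 : (1:ℝ) ≤ (1 + t ^ c)^3 := one_le_pow₀ (by linarith)
  have hD0 : (0:ℝ) < (1 + t ^ c)^3 := by linarith
  constructor
  · rw [Fn]
    positivity
  · -- key numerator bound
    have hkey : (n:ℝ) * ((1+t) ^ c - 1) ≤ 2 * t := by
      rw [hrpow]
      have h1 : exp (c*L) - 1 ≤ (c*L) * exp (c*L) := exp_sub_one_le _
      have h2 : exp (c*L) ≤ exp L := by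
        apply Real.exp_le_exp.2
        calc c * L ≤ 1 * L := by
              apply mul_le_mul_of_nonneg_right ?_ hL0.le
              rw [hc, div_le_one hnR]; exact_mod_cast hn
          _ = L := one_mul L
      have h3 : exp L = 1 + t := by rw [hL, Real.exp_log (by linarith)]
      have h4 : (n:ℝ) * (exp (c*L) - 1) ≤ (n:ℝ) * ((c*L) * exp (c*L)) :=
        mul_le_mul_of_nonneg_left h1 hnR.le
      have h5 : (n:ℝ) * c = 1 := by rw [hc]; field_simp
      have h6 : (n:ℝ) * ((c*L) * exp (c*L)) = L * exp (c*L) := by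
        rw [← mul_assoc, ← mul_assoc, h5, one_mul]
      rw [h6] at h4
      have h7 : L * exp (c*L) ≤ L * (1+t) := by
        apply mul_le_mul_of_nonneg_left ?_ hL0.le
        rw [← h3]; exact h2
      nlinarith
    have htc : t ^ (c-1) = t ^ c / t := by
      rw [Real.rpow_sub ht0, Real.rpow_one]
    have htc_le : t ^ (c-1) ≤ 1 / t := by
      rw [htc]
      exact (div_le_div_iff_of_pos_right ht0).2 (rpow_le_one ht0.le ht1.le hc0.le)
    have hmul : ((n:ℝ) * ((1+t)^c - 1)) * (t ^ (c-1)) ≤ (2*t) * (1/t) := by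
      apply mul_le_mul hkey htc_le htc0.le (by linarith)
    have h2t : (2*t) * (1/t) = 2 := by field_simp
    rw [h2t] at hmul
    have hnum0 : 0 ≤ 2*(n:ℝ)*((1+t)^c - 1)*t^(c-1) := by positivity
    have hnum : 2*(n:ℝ)*((1+t)^c - 1)*t^(c-1) ≤ 4 := by nlinarith
    rw [Fn]
    calc 2*(n:ℝ)*((1+t)^c - 1)*t^(c-1)/(1+t^c)^3 ≤ 2*(n:ℝ)*((1+t)^c - 1)*t^(c-1) := by
          apply div_le_self hnum0 hD1
      _ ≤ 4 := hnum

lemma Fn_tendsto {t : ℝ} (ht0 : 0 < t) (ht1 : t < 1) :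
    Tendsto (fun n : ℕ => Fn n t) atTop (𝓝 (log (1+t)/(4*t))) := by
  set L : ℝ := log (1+t) with hL
  have hL0 : 0 < L := log_pos (by linarith)
  have hslope : Tendsto (fun h : ℝ => h⁻¹ * (exp h - 1)) (𝓝[≠] 0) (𝓝 1) := by
    have h := Real.hasDerivAt_exp 0
    rw [hasDerivAt_iff_tendsto_slope] at h
    simpa [slope_fun_def, Real.exp_zero] using h
  have hinv : Tendsto (fun n : ℕ => (1:ℝ)/n) atTop (𝓝 0) :=
    tendsto_one_div_atTop_nhds_zero_nat
  have hLn : Tendsto (fun n : ℕ => L / n) atTop (𝓝[≠] 0) := by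
    rw [tendsto_nhdsWithin_iff]
    constructor
    · have := hinv.const_mul L
      rw [mul_zero] at this
      convert this using 2 with n
      field_simp
    · filter_upwards [eventually_ge_atTop 1] with n hn
      have hnR : (0:ℝ) < n := by exact_mod_cast hn
      exact div_ne_zero (ne_of_gt hL0) (ne_of_gt hnR)
  have h1 : Tendsto (fun n : ℕ => (n:ℝ) * ((1+t)^((1:ℝ)/n) - 1)) atTop (𝓝 L) := by
    have hcomp := hslope.comp hLn
    have h2 := hcomp.const_mul L
    rw [mul_one] at h2
    apply h2.congr'
    filter_upwards [eventually_ge_atTop 1] with n hn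
    have hnR : (0:ℝ) < n := by exact_mod_cast hn
    have hrw : (1+t)^((1:ℝ)/n) = exp (L/n) := by
      rw [rpow_def_of_pos (by linarith), hL]
      ring_nf
    rw [Function.comp_apply, hrw]
    field_simp
  have hylim : Tendsto (fun n : ℕ => ((1:ℝ)/n - 1) * log t) atTop (𝓝 (-log t)) := by
    have := (hinv.sub_const 1).mul_const (log t)
    simpa using this
  have h2 : Tendsto (fun n : ℕ => t ^ ((1:ℝ)/n - 1)) atTop (𝓝 t⁻¹) := by
    have hcomp := (Real.continuous_exp.continuousAt (x := -log t)).tendsto.comp hylim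
    have hval : exp (-log t) = t⁻¹ := by rw [Real.exp_neg, Real.exp_log ht0]
    rw [hval] at hcomp
    apply hcomp.congr
    intro n
    rw [Function.comp_apply, rpow_def_of_pos ht0, mul_comm]
  have hzlim : Tendsto (fun n : ℕ => ((1:ℝ)/n) * log t) atTop (𝓝 0) := by
    have := hinv.mul_const (log t)
    simpa using this
  have h3 : Tendsto (fun n : ℕ => (1 + t ^ ((1:ℝ)/n))^3) atTop (𝓝 8) := by
    have hcomp := (Real.continuous_exp.continuousAt (x := (0:ℝ))).tendsto.comp hzlim
    rw [Real.exp_zero] at hcomp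
    have hc2 : Tendsto (fun n : ℕ => t ^ ((1:ℝ)/n)) atTop (𝓝 1) := by
      apply hcomp.congr
      intro n
      rw [Function.comp_apply, rpow_def_of_pos ht0, mul_comm]
    have h := ((hc2.const_add 1).pow 3)
    have he : ((1:ℝ)+1)^3 = 8 := by norm_num
    rwa [he] at h
  have hcomb := ((h1.const_mul 2).mul h2).div h3 (by norm_num : (8:ℝ) ≠ 0)
  have hval : 2 * L * t⁻¹ / 8 = log (1+t)/(4*t) := by
    rw [hL]; field_simp; ring
  rw [hval] at hcomb
  apply hcomb.congr
  intro n
  simp only [Pi.div_apply]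
  rw [Fn]
  ring

lemma Fn_contOn (n : ℕ) : ContinuousOn (Fn n) (Ioo (0:ℝ) 1) := by
  set c : ℝ := (1:ℝ)/n with hc
  have h1 : ContinuousOn (fun t : ℝ => (1+t) ^ c) (Ioo (0:ℝ) 1) := by
    apply ContinuousOn.rpow_const
    · exact (continuous_const.add continuous_id).continuousOn
    · intro t ht; exact Or.inl (by simp; linarith [ht.1])
  have h2 : ContinuousOn (fun t : ℝ => t ^ (c - 1)) (Ioo (0:ℝ) 1) := by
    apply ContinuousOn.rpow_const continuousOn_id
    intro t ht; exact Or.inl (ne_of_gt ht.1)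
  have h3 : ContinuousOn (fun t : ℝ => t ^ c) (Ioo (0:ℝ) 1) := by
    apply ContinuousOn.rpow_const continuousOn_id
    intro t ht; exact Or.inl (ne_of_gt ht.1)
  have h4 : ContinuousOn (fun t : ℝ => (1 + t ^ c)^3) (Ioo (0:ℝ) 1) :=
    (continuousOn_const.add h3).pow 3
  apply ContinuousOn.div
  · exact ((continuousOn_const.mul (h1.sub continuousOn_const))).mul h2
  · exact h4
  · intro t ht
    have : 0 < t ^ c := rpow_pos_of_pos ht.1 c
    positivity

lemma int_flim : ∫ t in Ioo (0:ℝ) 1, log (1+t)/(4*t) = π^2/48 := by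
  have h : ∀ t ∈ Ioo (0:ℝ) 1, log (1+t)/(4*t) = (1/4) * (log (1+t)/t) := by
    intro t ht
    have := ht.1
    field_simp
  rw [setIntegral_congr_fun measurableSet_Ioo h, integral_const_mul, int_log_div]
  ring

theorem stmt18 : Filter.Tendsto (fun n : ℕ => (n:ℝ)^2 * (Ifun n - 3/4)) Filter.atTop (nhds (π^2 / 48)) := by
  have hmeas : ∀ n : ℕ, AEStronglyMeasurable (Fn n) (volume.restrict (Ioo (0:ℝ) 1)) :=
    fun n => (Fn_contOn n).aestronglyMeasurable measurableSet_Ioo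
  have hbound_int : Integrable (fun _ : ℝ => (4:ℝ)) (volume.restrict (Ioo (0:ℝ) 1)) := by
    apply integrable_const
  have hbound : ∀ n : ℕ, ∀ᵐ t ∂(volume.restrict (Ioo (0:ℝ) 1)), ‖Fn n t‖ ≤ 4 := by
    intro n
    rw [ae_restrict_iff' measurableSet_Ioo]
    filter_upwards with t ht
    rcases Nat.eq_zero_or_pos n with hn | hn
    · subst hn
      simp [Fn]
    · obtain ⟨h0, h4⟩ := Fn_nonneg_bound hn ht.1 ht.2
      rw [Real.norm_eq_abs, abs_of_nonneg h0]
      exact h4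
  have hlim : ∀ᵐ t ∂(volume.restrict (Ioo (0:ℝ) 1)),
      Tendsto (fun n : ℕ => Fn n t) atTop (𝓝 (log (1+t)/(4*t))) := by
    rw [ae_restrict_iff' measurableSet_Ioo]
    filter_upwards with t ht
    exact Fn_tendsto ht.1 ht.2
  have hdct := tendsto_integral_of_dominated_convergence (μ := volume.restrict (Ioo (0:ℝ) 1))
    (F := fun n t => Fn n t) (f := fun t => log (1+t)/(4*t)) (fun _ => (4:ℝ))
    hmeas hbound_int hbound hlim
  rw [int_flim] at hdct
  apply hdct.congr'
  filter_upwards [eventually_ge_atTop 1] with n hn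
  exact (key_id n hn).symm
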